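/- Generalized lower bound for P-colorings of edges: Let G be a loopless digraph on a finite vertex set V and P a finite poset. If the 2-walks (edges) of G admit a P-coloring, then the chromatic number of the undirected version of G is at most |A(P)|, the number of lower sets of P. -/

import Mathlib

/-- A `k`-walk in the digraph `G` is a function `w : Fin k → V` such that
consecutive vertices are joined by an edge of `G`. -/
def IsWalk {V : Type*} (G : V → V → Prop) {k : ℕ} (w : Fin k → V) : Prop :=
  ∀ i : ℕ, ∀ h : i + 1 < k, G (w ⟨i, Nat.lt_of_succ_lt h⟩) (w ⟨i + 1, h⟩)

theorem IsWalk.walkPrefix {V : Type*} {G : V → V → Prop} {k : ℕ} {u : Fin (k + 1) → V}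
    (hu : IsWalk G u) : IsWalk G (fun i : Fin k => u i.castSucc) := by
  intro i h
  exact hu i (by omega)

theorem IsWalk.walkSuffix {V : Type*} {G : V → V → Prop} {k : ℕ} {u : Fin (k + 1) → V}
    (hu : IsWalk G u) : IsWalk G (fun i : Fin k => u i.succ) := by
  intro i h
  exact hu (i + 1) (by omega)

/-- The `k`-walks of `G`, as a subtype. -/
def Walks {V : Type*} (G : V → V → Prop) (k : ℕ) : Type _ :=
  {w : Fin k → V // IsWalk G w}

/-- A `P`-coloring of the `k`-walks of `G`: for every `(k+1)`-walk `u`,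
the color of its prefix `k`-walk is not `≤` the color of its suffix `k`-walk. -/
def IsPColoring {V : Type*} {P : Type*} [Preorder P] (G : V → V → Prop) (k : ℕ)
    (c : Walks G k → P) : Prop :=
  ∀ u : Walks G (k + 1),
    ¬ c ⟨fun i => u.1 i.castSucc, u.2.walkPrefix⟩ ≤ c ⟨fun i => u.1 i.succ, u.2.walkSuffix⟩

/-- The undirected version of a digraph `G`: `u` and `v` are adjacent iff `u ≠ v` and at
least one of the directed edges `u → v`, `v → u` is present. -/
def undirected {V : Type*} (G : V → V → Prop) : SimpleGraph V where
  Adj u v := u ≠ v ∧ (G u v ∨ G v u)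
  symm := ⟨fun _ _ h => ⟨h.1.symm, h.2.symm⟩⟩
  loopless := ⟨fun _ h => h.1 rfl⟩

/-- **Generalized lower bound for `P`-colorings of edges.** If the 2-walks (edges) of a
loopless digraph `G` on a finite vertex set admit a `P`-coloring for a finite poset `P`,
then the chromatic number of the undirected version of `G` is at most `|A(P)|`, the
number of lower sets of `P`. -/

def edgeWalk {V : Type*} {G : V → V → Prop} {a b : V} (hab : G a b) : Walks G 2 :=
  ⟨![a, b], by
    intro i h
    have : i = 0 := by omega
    subst this
    simpa using hab⟩

def tripleWalk {V : Type*} {G : V → V → Prop} {a b d : V} (hab : G a b) (hbd : G b d) :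
    Walks G 3 :=
  ⟨![a, b, d], by
    intro i h
    rcases (by omega : i = 0 ∨ i = 1) with rfl | rfl
    · simpa using hab
    · simpa using hbd⟩

theorem key_step {V : Type*} {G : V → V → Prop} {P : Type*} [Preorder P]
    {c : Walks G 2 → P} (hc : IsPColoring G 2 c) {a b d : V} (hab : G a b) (hbd : G b d) :
    ¬ c (edgeWalk hab) ≤ c (edgeWalk hbd) := by
  have := hc (tripleWalk hab hbd)
  convert this using 3 <;>
  · refine congrArg c (Subtype.ext ?_)
    funext i
    fin_cases i <;> rfl


theorem generalized_lower_bound_edge_coloring {V : Type*} [Fintype V]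
    (G : V → V → Prop) (hG : ∀ v, ¬ G v v)
    (P : Type*) [PartialOrder P] [Fintype P]
    (h : ∃ c : Walks G 2 → P, IsPColoring G 2 c) :
    (undirected G).chromaticNumber ≤ (Nat.card (LowerSet P) : ℕ∞) := by
  classical
  obtain ⟨c, hc⟩ := h
  have : Fintype (LowerSet P) := Fintype.ofInjective (fun L : LowerSet P => (L : Set P))
    SetLike.coe_injective
  let f : V → LowerSet P := fun v =>
    ⟨{x | ∀ w, ∀ hw : G w v, ¬ c (edgeWalk hw) ≤ x}, by
      intro x y hxy hx w hw hle
      exact hx w hw (hle.trans hxy)⟩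
  have hf : ∀ {u v : V}, G u v → f u ≠ f v := by
    intro u v huv heq
    have h1 : c (edgeWalk huv) ∈ (f u : Set P) := fun w hw => key_step hc hw huv
    have h2 : c (edgeWalk huv) ∉ (f v : Set P) := fun hmem => hmem u huv le_rfl
    rw [heq] at h1
    exact h2 h1
  have C : (undirected G).Coloring (LowerSet P) := SimpleGraph.Coloring.mk f (by
    rintro u v ⟨hne, huv | hvu⟩
    · exact hf huv
    · exact fun e => hf hvu e.symm)
  calc (undirected G).chromaticNumber ≤ (Fintype.card (LowerSet P) : ℕ∞) :=
        C.colorable.chromaticNumber_le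
    _ = (Nat.card (LowerSet P) : ℕ∞) := by rw [Nat.card_eq_fintype_card]
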